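/- Let A be a countable subset of ℂ, and for each α ∈ A and each natural number s ≥ 0 let E_{α,s} be a dense subset of ℂ. Then there exists an entire function f : ℂ → ℂ which is not a polynomial such that for every α ∈ A and every s ≥ 0 the s-th derivative of f satisfies f^(s)(α) ∈ E_{α,s}. -/

import Mathlib

open Polynomial Finset Metric Filter Topology

private lemma iterDerivAdd (k : ℕ) (p q : Polynomial ℂ) :
    derivative^[k] (p + q) = derivative^[k] p + derivative^[k] q := by
  induction k generalizing p q with
  | zero => simp
  | succ k ih => simp [Function.iterate_succ_apply, ih]

private lemma evalZero (α : ℂ) :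
    ∀ (s : ℕ) (p : Polynomial ℂ), (X - C α) ^ (s + 1) ∣ p → (derivative^[s] p).eval α = 0 := by
  intro s
  induction s with
  | zero =>
    rintro p ⟨q, rfl⟩
    simp
  | succ s ih =>
    rintro p ⟨q, rfl⟩
    rw [Function.iterate_succ_apply]
    apply ih
    rw [derivative_mul, derivative_X_sub_C_pow]
    apply dvd_add
    · have h1 : (X - C α) ^ (s + 1) ∣ C ((s + 1 + 1 : ℕ) : ℂ) * (X - C α) ^ (s + 1 + 1 - 1) :=
        by rw [Nat.add_sub_cancel]; exact dvd_mul_left _ _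
      exact h1.mul_right _
    · exact (pow_dvd_pow _ (by omega)).mul_right _

private lemma evalFac (α : ℂ) :
    ∀ (s : ℕ) (q : Polynomial ℂ),
      (derivative^[s] ((X - C α) ^ s * q)).eval α = (s.factorial : ℂ) * q.eval α := by
  intro s
  induction s with
  | zero => intro q; simp
  | succ s ih =>
    intro q
    rw [Function.iterate_succ_apply, derivative_mul, derivative_X_sub_C_pow,
      iterDerivAdd, eval_add]
    have h1 : (derivative^[s] ((X - C α) ^ (s + 1) * derivative q)).eval α = 0 :=
      evalZero α s _ (dvd_mul_right _ _)
    have h2 : C ((s + 1 : ℕ) : ℂ) * (X - C α) ^ (s + 1 - 1) * q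
        = C ((s + 1 : ℕ) : ℂ) * ((X - C α) ^ s * q) := by
      rw [Nat.add_sub_cancel, mul_assoc]
    rw [h2, iterate_derivative_C_mul, eval_mul, eval_C, ih, h1, add_zero,
      Nat.factorial_succ]
    push_cast
    ring

theorem stmt_0 (A : Set ℂ) (hA : A.Countable)
    (E : ℂ → ℕ → Set ℂ) (hE : ∀ α ∈ A, ∀ s : ℕ, Dense (E α s)) :
    ∃ f : ℂ → ℂ, Differentiable ℂ f ∧
      (∀ p : Polynomial ℂ, f ≠ fun z => p.eval z) ∧
      ∀ α ∈ A, ∀ s : ℕ, iteratedDeriv s f α ∈ E α s := by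
  classical
  -- choose a point outside A
  have hβex : ∃ β : ℂ, β ∉ A := by
    by_contra h
    push_neg at h
    have : Uncountable ℂ := Complex.ofReal_injective.uncountable
    exact Set.not_countable_univ ((Set.eq_univ_of_forall h) ▸ hA)
  obtain ⟨β, hβ⟩ := hβex
  set A' : Set ℂ := insert β A with hA'
  have hA'c : A'.Countable := hA.insert β
  have hA'ne : A'.Nonempty := ⟨β, Set.mem_insert _ _⟩
  set E' : ℂ → ℕ → Set ℂ := fun γ s => if γ = β then {(0 : ℂ)}ᶜ else E γ s with hE'
  have hE'dense : ∀ γ ∈ A', ∀ s, Dense (E' γ s) := by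
    intro γ hγ s
    by_cases h : γ = β
    · simp only [hE', if_pos h]
      exact dense_compl_singleton _
    · simp only [hE', if_neg h]
      exact hE γ ((Set.mem_insert_iff.mp hγ).resolve_left h) s
  obtain ⟨g, hg⟩ := hA'c.exists_eq_range hA'ne
  set a : ℕ → ℂ := fun n => g (Nat.unpair n).1 with ha
  have haA' : ∀ n, a n ∈ A' := fun n => hg ▸ Set.mem_range_self _
  have hinf : ∀ γ ∈ A', {n | a n = γ}.Infinite := by
    intro γ hγ
    rw [hg] at hγ
    obtain ⟨i, rfl⟩ := hγ
    apply Set.infinite_of_injective_forall_mem (f := fun j : ℕ => Nat.pair i j)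
    · intro j j' h
      simpa using congrArg (fun m => (Nat.unpair m).2) h
    · intro j
      simp [ha, Nat.unpair_pair]
  set P : ℕ → Polynomial ℂ := fun n => ∏ k ∈ Finset.range n, (X - C (a k)) with hP
  -- vanishing of derivatives
  have vanish : ∀ (γ : ℂ) (n s : ℕ), s + 1 ≤ Nat.count (fun k => a k = γ) n →
      (derivative^[s] (P n)).eval γ = 0 := by
    intro γ n s hs
    have h1 : (X - C γ) ^ (Nat.count (fun k => a k = γ) n)
        = ∏ k ∈ (Finset.range n).filter (fun k => a k = γ), (X - C (a k)) := by
      rw [Finset.prod_congr rfl (fun k hk => by rw [(Finset.mem_filter.mp hk).2]),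
        Finset.prod_const, Nat.count_eq_card_filter_range]
    have hdvd : (X - C γ) ^ (Nat.count (fun k => a k = γ) n) ∣ P n := by
      rw [h1, hP]
      exact Finset.prod_dvd_prod_of_subset _ _ _ (Finset.filter_subset _ _)
    exact evalZero γ s _ ((pow_dvd_pow _ hs).trans hdvd)
  -- nonvanishing at the critical order
  have Dne : ∀ n, (derivative^[Nat.count (fun k => a k = a n) n] (P n)).eval (a n) ≠ 0 := by
    intro n
    have hsplit : P n = (X - C (a n)) ^ (Nat.count (fun k => a k = a n) n)
        * ∏ k ∈ (Finset.range n).filter (fun k => ¬a k = a n), (X - C (a k)) := by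
      rw [show P n = ∏ k ∈ Finset.range n, (X - C (a k)) from rfl,
        ← Finset.prod_filter_mul_prod_filter_not (Finset.range n) (fun k => a k = a n)]
      congr 1
      rw [Finset.prod_congr rfl (fun k hk => by rw [(Finset.mem_filter.mp hk).2]),
        Finset.prod_const, Nat.count_eq_card_filter_range]
    rw [hsplit, evalFac]
    apply mul_ne_zero
    · exact_mod_cast Nat.factorial_ne_zero _
    · rw [eval_prod]
      apply Finset.prod_ne_zero_iff.mpr
      intro k hk
      simp only [eval_sub, eval_X, eval_C]
      exact sub_ne_zero.mpr fun h => (Finset.mem_filter.mp hk).2 h.symm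
  -- size control
  set Kp : ℕ → ℕ → ℝ := fun N m => ∏ k ∈ Finset.range m, ((N : ℝ) + ‖a k‖) with hKp
  have hKnonneg : ∀ N m, 0 ≤ Kp N m := fun N m =>
    Finset.prod_nonneg fun k _ => by positivity
  set ε : ℕ → ℝ := fun n => (1 / 2 : ℝ) ^ n / (Kp n n + 1) with hε
  have hεpos : ∀ n, 0 < ε n := fun n =>
    div_pos (by positivity) (by nlinarith [hKnonneg n n])
  -- the choice at each step
  have hex : ∀ (n : ℕ) (T : Polynomial ℂ), ∃ c : ℂ, ‖c‖ < ε n ∧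
      (derivative^[Nat.count (fun k => a k = a n) n] (T + Polynomial.C c * P n)).eval (a n)
        ∈ E' (a n) (Nat.count (fun k => a k = a n) n) := by
    intro n T
    set s := Nat.count (fun k => a k = a n) n with hs
    set D := (derivative^[s] (P n)).eval (a n) with hD
    have hD0 : D ≠ 0 := Dne n
    set prev := (derivative^[s] T).eval (a n) with hprev
    obtain ⟨y, hy1, hy2⟩ := (hE'dense (a n) (haA' n) s).inter_open_nonempty
      (Metric.ball prev (ε n * ‖D‖)) Metric.isOpen_ball
      (Metric.nonempty_ball.mpr (mul_pos (hεpos n) (norm_pos_iff.mpr hD0)))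
    refine ⟨(y - prev) / D, ?_, ?_⟩
    · rw [norm_div, div_lt_iff₀ (norm_pos_iff.mpr hD0)]
      have := mem_ball_iff_norm.mp hy1
      linarith [this]
    · rw [iterDerivAdd, eval_add, iterate_derivative_C_mul, eval_mul, eval_C]
      have hy : prev + (y - prev) / D * D = y := by field_simp; ring
      rw [← hprev, ← hD, hy]
      exact hy2
  -- recursive construction of partial sums
  set S : ℕ → Polynomial ℂ := fun n =>
    Nat.rec (0 : Polynomial ℂ)
      (fun m T => T + Polynomial.C (Classical.choose (hex m T)) * P m) n with hS
  set c : ℕ → ℂ := fun n => Classical.choose (hex n (S n)) with hc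
  have hSsucc : ∀ n, S (n + 1) = S n + Polynomial.C (c n) * P n := fun n => rfl
  have hspec : ∀ n, ‖c n‖ < ε n ∧
      (derivative^[Nat.count (fun k => a k = a n) n] (S (n + 1))).eval (a n)
        ∈ E' (a n) (Nat.count (fun k => a k = a n) n) := fun n =>
    Classical.choose_spec (hex n (S n))
  -- the entire function
  set F : ℕ → ℂ → ℂ := fun m z => (Polynomial.C (c m) * P m).eval z with hF
  set f : ℂ → ℂ := fun z => ∑' m, F m z with hf
  have hpart : ∀ (n : ℕ) (z : ℂ), ∑ m ∈ Finset.range n, F m z = (S n).eval z := by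
    intro n z
    induction n with
    | zero => simp [show S 0 = (0 : Polynomial ℂ) from rfl]
    | succ n ih => rw [Finset.sum_range_succ, ih, hSsucc, eval_add]
  have hFle : ∀ (N : ℕ) (m : ℕ), ∀ z ∈ Metric.closedBall (0 : ℂ) N,
      ‖F m z‖ ≤ ε m * Kp N m := by
    intro N m z hz
    have hz' : ‖z‖ ≤ (N : ℝ) := by simpa using hz
    have h1 : ‖(P m).eval z‖ ≤ Kp N m := by
      rw [hP]
      simp only [eval_prod, eval_sub, eval_X, eval_C]
      rw [norm_prod]
      refine Finset.prod_le_prod (fun k _ => norm_nonneg _) (fun k _ => ?_)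
      exact (norm_sub_le _ _).trans (add_le_add hz' le_rfl)
    have : ‖F m z‖ = ‖c m‖ * ‖(P m).eval z‖ := by
      simp [hF, eval_mul]
    rw [this]
    exact mul_le_mul (hspec m).1.le h1 (norm_nonneg _) (hεpos m).le
  have hsum : ∀ N : ℕ, Summable (fun m => ε m * Kp N m) := by
    intro N
    rw [← summable_nat_add_iff N]
    refine Summable.of_nonneg_of_le (fun m => by positivity) (fun m => ?_)
      ((summable_nat_add_iff N).mpr summable_geometric_two)
    set n := m + N with hn
    have hNn : (N : ℝ) ≤ (n : ℝ) := by exact_mod_cast Nat.le_add_left N m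
    have h1 : Kp N n ≤ Kp n n :=
      Finset.prod_le_prod (fun k _ => by positivity)
        (fun k _ => add_le_add hNn le_rfl)
    have h2 : ε n * Kp N n ≤ ε n * Kp n n :=
      mul_le_mul_of_nonneg_left h1 (hεpos n).le
    refine h2.trans ?_
    rw [hε, div_mul_eq_mul_div, div_le_iff₀ (by nlinarith [hKnonneg n n])]
    nlinarith [hKnonneg n n, pow_pos (by norm_num : (0:ℝ) < 1/2) n]
  have hTU : ∀ N : ℕ, TendstoUniformlyOn (fun n z => ∑ m ∈ Finset.range n, F m z) f atTop
      (Metric.closedBall (0 : ℂ) N) :=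
    fun N => tendstoUniformlyOn_tsum_nat (hsum N) (fun m z hz => hFle N m z hz)
  have hTLU : TendstoLocallyUniformlyOn (fun n z => (S n).eval z) f atTop Set.univ := by
    have heq : (fun (n : ℕ) (z : ℂ) => (S n).eval z)
        = fun n z => ∑ m ∈ Finset.range n, F m z := by
      funext n z
      rw [hpart]
    rw [heq, tendstoLocallyUniformlyOn_iff_forall_isCompact isOpen_univ]
    intro K _ hK
    obtain ⟨r, hr⟩ := hK.isBounded.subset_closedBall 0
    have hsub : K ⊆ Metric.closedBall (0 : ℂ) (⌈r⌉₊ : ℕ) :=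
      hr.trans (Metric.closedBall_subset_closedBall (Nat.le_ceil r))
    exact (hTU ⌈r⌉₊).mono hsub
  have key : ∀ s : ℕ, TendstoLocallyUniformlyOn
      (fun n z => (derivative^[s] (S n)).eval z) (iteratedDeriv s f) atTop Set.univ := by
    intro s
    induction s with
    | zero => simpa [iteratedDeriv_zero] using hTLU
    | succ s ih =>
      have h2 := ih.deriv
        (Eventually.of_forall fun n => (Polynomial.differentiable _).differentiableOn)
        isOpen_univ
      have e1 : (deriv ∘ fun (n : ℕ) (z : ℂ) => (derivative^[s] (S n)).eval z)
          = fun n z => (derivative^[s + 1] (S n)).eval z := by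
        funext n z
        simp only [Function.comp_apply]
        rw [Polynomial.deriv, Function.iterate_succ_apply']
      rw [e1] at h2
      rw [iteratedDeriv_succ]
      exact h2
  have hdiff : Differentiable ℂ f := by
    have := hTLU.differentiableOn
      (Eventually.of_forall fun n => (Polynomial.differentiable _).differentiableOn)
      isOpen_univ
    rwa [← differentiableOn_univ]
  have hmem : ∀ γ ∈ A', ∀ s : ℕ, iteratedDeriv s f γ ∈ E' γ s := by
    intro γ hγ s
    have hinfγ := hinf γ hγ
    set n₀ := Nat.nth (fun n => a n = γ) s with hn₀
    have han : a n₀ = γ := Nat.nth_mem_of_infinite hinfγ s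
    have hcount : Nat.count (fun n => a n = γ) n₀ = s := Nat.count_nth_of_infinite hinfγ s
    have hlim : Tendsto (fun n => (derivative^[s] (S n)).eval γ) atTop
        (𝓝 (iteratedDeriv s f γ)) := (key s).tendsto_at (Set.mem_univ γ)
    have hconst : ∀ n, n₀ + 1 ≤ n →
        (derivative^[s] (S n)).eval γ = (derivative^[s] (S (n₀ + 1))).eval γ := by
      intro n hn
      induction n with
      | zero => omega
      | succ n ih =>
        rcases Nat.lt_or_ge (n₀ + 1) (n + 1) with h | h
        · have hn' : n₀ + 1 ≤ n := by omega
          have hcnt : s + 1 ≤ Nat.count (fun k => a k = γ) n := by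
            have h1 : Nat.count (fun k => a k = γ) (n₀ + 1) = s + 1 := by
              rw [Nat.count_succ, if_pos han]
              omega
            calc s + 1 = Nat.count (fun k => a k = γ) (n₀ + 1) := h1.symm
              _ ≤ Nat.count (fun k => a k = γ) n := Nat.count_monotone _ hn'
          rw [hSsucc, iterDerivAdd, eval_add, ih hn', iterate_derivative_C_mul,
            eval_mul, eval_C, vanish γ n s hcnt, mul_zero, add_zero]
        · have h2 : n + 1 = n₀ + 1 := by omega
          rw [h2]
    have heq : iteratedDeriv s f γ = (derivative^[s] (S (n₀ + 1))).eval γ := by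
      refine tendsto_nhds_unique hlim (Tendsto.congr' ?_ tendsto_const_nhds)
      filter_upwards [eventually_ge_atTop (n₀ + 1)] with n hn
      exact (hconst n hn).symm
    rw [heq]
    have hmem0 := (hspec n₀).2
    rw [han] at hmem0
    rwa [hcount] at hmem0
  refine ⟨f, hdiff, ?_, fun α hα s => ?_⟩
  · intro p hp
    have h0 : iteratedDeriv (p.natDegree + 1) f β ∈ E' β (p.natDegree + 1) :=
      hmem β (Set.mem_insert _ _) _
    simp only [hE', if_pos rfl, Set.mem_compl_iff, Set.mem_singleton_iff] at h0
    apply h0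
    have hpf : ∀ (t : ℕ) (z : ℂ), iteratedDeriv t f z = (derivative^[t] p).eval z := by
      intro t
      induction t with
      | zero =>
        intro z
        rw [iteratedDeriv_zero, hp]
        simp
      | succ t ih =>
        intro z
        rw [iteratedDeriv_succ, funext ih, Polynomial.deriv, Function.iterate_succ_apply']
    rw [hpf, Polynomial.iterate_derivative_eq_zero (by omega), eval_zero]
  · have h1 := hmem α (Set.mem_insert_of_mem _ hα) s
    have hne : α ≠ β := fun h => hβ (h ▸ hα)
    simp only [hE', if_neg hne] at h1
    exact h1
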